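/- arXiv:2206.10947 — 9 statements merged into one kernel-verified Lean document; each statement's English description precedes it below -/
import Mathlib

section
/- For every integer m ≥ 1 and every complex number g with |g| < 1/4, the recursively defined functions satisfy the closed form X_m(g) = 2g·[(1+z)^m − (1−z)^m] / [(1+z)^{m+1} − (1−z)^{m+1}], where z = √(1−4g) is the principal square root; in particular the denominator (1+z)^{m+1} − (1−z)^{m+1} is nonzero for |g| < 1/4. -/
open scoped Real BigOperators

/-- The generating functions `X_m` of rooted planar trees of height at most `m`:
`X_0 = 0`, `X_1(g) = g`, `X_m(g) = g/(1 - X_{m-1}(g))`. -/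
noncomputable def Xc : ℕ → ℂ → ℂ
  | 0, _ => 0
  | (m + 1), g => g / (1 - Xc m g)

/-- For every `m ≥ 1` and every complex `g` with `|g| < 1/4`, with `z = √(1-4g)` the
principal square root, the denominator `(1+z)^(m+1) - (1-z)^(m+1)` is nonzero and
`X_m(g) = 2g·[(1+z)^m − (1−z)^m] / [(1+z)^(m+1) − (1−z)^(m+1)]`. -/
theorem Xc_closed_form (m : ℕ) (hm : 1 ≤ m) (g : ℂ) (hg : ‖g‖ < 1 / 4)
    (z : ℂ) (hz : z = (1 - 4 * g) ^ ((1 : ℂ) / 2)) :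
    (1 + z) ^ (m + 1) - (1 - z) ^ (m + 1) ≠ 0 ∧
      Xc m g = 2 * g * ((1 + z) ^ m - (1 - z) ^ m) /
        ((1 + z) ^ (m + 1) - (1 - z) ^ (m + 1)) := by
  clear hm
  -- basic facts about z
  have hgre : ‖4 * g‖ < 1 := by
    rw [norm_mul]
    simpa using by linarith [hg]
  have hwre : (0 : ℝ) < (1 - 4 * g).re := by
    have : |(4 * g).re| ≤ ‖4 * g‖ := Complex.abs_re_le_norm _
    have := abs_le.1 this
    simp only [Complex.sub_re, Complex.one_re]
    linarith [this.1, this.2, hgre]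
  have hzre : (0 : ℝ) < z.re := by
    rw [hz, show ((1 : ℂ)/2) = (2 : ℂ)⁻¹ by norm_num, Complex.cpow_inv_two_re]
    apply Real.sqrt_pos.2
    have : (1 - 4*g).re ≤ ‖1 - 4 * g‖ := Complex.re_le_norm _
    linarith
  have hz2 : z ^ 2 = 1 - 4 * g := by
    rw [hz, show ((1 : ℂ)/2) = ((2 : ℕ) : ℂ)⁻¹ by norm_num]
    exact Complex.cpow_nat_inv_pow _ two_ne_zero
  have habs : ‖1 - z‖ < ‖1 + z‖ := by
    have h1 : Complex.normSq (1 - z) < Complex.normSq (1 + z) := by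
      simp only [Complex.normSq_sub, Complex.normSq_add]
      have : Complex.normSq 1 = 1 := by simp
      nlinarith [Complex.re_ofReal_mul, hzre, Complex.mul_conj z,
        show ((1 : ℂ) * (starRingEnd ℂ) z).re = z.re by simp]
    simpa [Complex.norm_def] using Real.sqrt_lt_sqrt (Complex.normSq_nonneg _) h1
  have hD : ∀ k : ℕ, (1 + z) ^ (k + 1) - (1 - z) ^ (k + 1) ≠ 0 := by
    intro k
    have h1 : ‖(1 - z) ^ (k + 1)‖ < ‖(1 + z) ^ (k + 1)‖ := by
      rw [norm_pow, norm_pow]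
      exact pow_lt_pow_left₀ habs (norm_nonneg _) (Nat.succ_ne_zero k)
    intro h
    rw [sub_eq_zero] at h
    rw [h] at h1
    exact lt_irrefl _ h1
  -- key algebraic identity: D k - 2g * N k = D (k+1) / 2
  have key : ∀ k : ℕ,
      ((1 + z) ^ (k + 1) - (1 - z) ^ (k + 1)) - 2 * g * ((1 + z) ^ k - (1 - z) ^ k)
        = ((1 + z) ^ (k + 2) - (1 - z) ^ (k + 2)) / 2 := by
    intro k
    have h2g : 2 * g = (1 + z) * (1 - z) / 2 := by
      linear_combination (1/2 : ℂ) * hz2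
    rw [h2g]
    ring
  -- main induction
  suffices H : ∀ k : ℕ, Xc k g = 2 * g * ((1 + z) ^ k - (1 - z) ^ k) /
      ((1 + z) ^ (k + 1) - (1 - z) ^ (k + 1)) from ⟨hD m, H m⟩
  intro k
  induction k with
  | zero => simp [Xc]
  | succ n ih =>
    have hDn := hD n
    have hDn1 := hD (n + 1)
    have h1 : 1 - 2 * g * ((1 + z) ^ n - (1 - z) ^ n) /
        ((1 + z) ^ (n + 1) - (1 - z) ^ (n + 1))
        = (((1 + z) ^ (n + 2) - (1 - z) ^ (n + 2)) / 2) /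
          ((1 + z) ^ (n + 1) - (1 - z) ^ (n + 1)) := by
      rw [← key n]
      field_simp
    rw [Xc, ih, h1]
    have h2 : ((1 + z) ^ (n + 2) - (1 - z) ^ (n + 2)) / 2 ≠ 0 := by
      have := hD (n + 1)
      simpa [show n + 1 + 1 = n + 2 from rfl] using this
    rw [div_div_eq_mul_div]
    rw [show n + 1 + 1 = n + 2 from rfl]
    field_simp
end

section
/- For every integer m ≥ 1 and every real g with 0 < g < 1/4, one has U_m(1/(2√g)) ≠ 0 and X_m(g) = √g · U_{m−1}(1/(2√g)) / U_m(1/(2√g)), where U_m denotes the m-th Chebyshev polynomial of the second kind. -/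
open scoped Real BigOperators

lemma chebyU_pos_mono (x : ℝ) (hx : 1 ≤ x) (n : ℕ) :
    0 < Polynomial.eval x (Polynomial.Chebyshev.U ℝ (n : ℤ)) ∧
      Polynomial.eval x (Polynomial.Chebyshev.U ℝ (n : ℤ)) ≤
        Polynomial.eval x (Polynomial.Chebyshev.U ℝ ((n : ℤ) + 1)) := by
  induction n with
  | zero =>
    simp [Polynomial.Chebyshev.U_zero, Polynomial.Chebyshev.U_one]
    nlinarith
  | succ n ih =>
    obtain ⟨h0, h1⟩ := ih
    have hrec := Polynomial.Chebyshev.U_add_two ℝ (n : ℤ)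
    have he : Polynomial.eval x (Polynomial.Chebyshev.U ℝ ((n : ℤ) + 2)) =
        2 * x * Polynomial.eval x (Polynomial.Chebyshev.U ℝ ((n : ℤ) + 1)) -
          Polynomial.eval x (Polynomial.Chebyshev.U ℝ (n : ℤ)) := by
      rw [hrec]; simp
    have hcast : ((n + 1 : ℕ) : ℤ) = (n : ℤ) + 1 := by push_cast; ring
    rw [hcast]
    constructor
    · linarith
    · have h2 : ((n : ℤ) + 1) + 1 = (n : ℤ) + 2 := by ring
      rw [h2, he]
      nlinarith

/-- For every `m ≥ 1` and real `0 < g < 1/4`, the Chebyshev polynomial of the second kind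
satisfies `U_m(1/(2√g)) ≠ 0` and `X_m(g) = √g · U_{m−1}(1/(2√g)) / U_m(1/(2√g))`. -/
theorem Xc_eq_chebyshevU (m : ℕ) (hm : 1 ≤ m) (g : ℝ) (hg0 : 0 < g) (hg : g < 1 / 4) :
    Polynomial.eval (1 / (2 * Real.sqrt g)) (Polynomial.Chebyshev.U ℝ (m : ℤ)) ≠ 0 ∧
      Xc m (g : ℂ) =
        ((Real.sqrt g *
            Polynomial.eval (1 / (2 * Real.sqrt g)) (Polynomial.Chebyshev.U ℝ ((m : ℤ) - 1)) /
            Polynomial.eval (1 / (2 * Real.sqrt g)) (Polynomial.Chebyshev.U ℝ (m : ℤ)) : ℝ) : ℂ) := by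
  clear hm
  set s := Real.sqrt g with hs
  have hs0 : 0 < s := Real.sqrt_pos.mpr hg0
  have hs2 : s * s = g := Real.mul_self_sqrt hg0.le
  set x := 1 / (2 * s) with hx
  have hx1 : 1 ≤ x := by
    rw [hx, le_div_iff₀ (by linarith)]
    nlinarith
  have hsx : 2 * s * x = 1 := by
    rw [hx]; field_simp
  induction m with
  | zero =>
    constructor
    · norm_num [Polynomial.Chebyshev.U_zero]
    · show (0 : ℂ) = _
      norm_num [Polynomial.Chebyshev.U_zero,
        show ((0:ℕ):ℤ) - 1 = -1 by norm_num, Polynomial.Chebyshev.U_neg_one]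
  | succ m ih =>
    obtain ⟨hUne, hXm⟩ := ih
    have hb := (chebyU_pos_mono x hx1 m).1
    have hc := (chebyU_pos_mono x hx1 (m + 1)).1
    set a := Polynomial.eval x (Polynomial.Chebyshev.U ℝ (((m:ℤ)) - 1)) with hA
    set b := Polynomial.eval x (Polynomial.Chebyshev.U ℝ ((m:ℤ))) with hB
    set c := Polynomial.eval x (Polynomial.Chebyshev.U ℝ ((m:ℤ) + 1)) with hC
    have hc' : 0 < c := by
      rwa [show ((m + 1 : ℕ) : ℤ) = (m : ℤ) + 1 by push_cast; ring] at hc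
    have hrec : c = 2 * x * b - a := by
      have h := Polynomial.Chebyshev.U_add_two ℝ ((m : ℤ) - 1)
      have h2 : (m : ℤ) - 1 + 2 = (m : ℤ) + 1 := by ring
      have h1 : (m : ℤ) - 1 + 1 = (m : ℤ) := by ring
      rw [h2, h1] at h
      rw [hC, hB, hA, h]; simp
    have hkey : s * c = b - s * a := by
      rw [hrec]; nlinarith [hsx]
    have hcast1 : ((m + 1 : ℕ) : ℤ) = (m : ℤ) + 1 := by push_cast; ring
    have hcast2 : (m : ℤ) + 1 - 1 = (m : ℤ) := by ring
    rw [hcast1, hcast2, ← hC, ← hB]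
    refine ⟨ne_of_gt hc', ?_⟩
    show (g : ℂ) / (1 - Xc m g) = _
    rw [hXm]
    have hreal : g / (1 - s * a / b) = s * b / c := by
      have h1 : (1 : ℝ) - s * a / b = s * c / b := by
        field_simp
        linarith [hkey]
      rw [h1]
      field_simp
      linear_combination (-1) * hs2
    calc (g : ℂ) / (1 - ((s * a / b : ℝ) : ℂ))
        = ((g / (1 - s * a / b) : ℝ) : ℂ) := by push_cast; ring
      _ = ((s * b / c : ℝ) : ℂ) := by rw [hreal]
end

section
/- For every integer m ≥ 1 and every real g with 0 < g < 1/4, the product Y_m(g) = ∏_{k=1}^m X_k(g) equals g^{m/2} / U_m(1/(2√g)), where g^{m/2} = (√g)^m and U_m is the m-th Chebyshev polynomial of the second kind (whose value at 1/(2√g) is nonzero for 0 < g < 1/4). -/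
open scoped Real BigOperators

/-- `Y_m(g) = ∏_{k=1}^m X_k(g)`, the generating function of one-sided trees of height `m`. -/
noncomputable def Yc (m : ℕ) (g : ℂ) : ℂ := ∏ k ∈ Finset.Icc 1 m, Xc k g

open Polynomial Polynomial.Chebyshev

lemma U_eval_rec (x : ℝ) (m : ℕ) :
    eval x (U ℝ ((m : ℤ) + 2)) = 2 * x * eval x (U ℝ ((m : ℤ) + 1)) - eval x (U ℝ m) := by
  rw [U_add_two]; simp

lemma U_pos (x : ℝ) (hx : 1 < x) :
    ∀ m : ℕ, 0 < eval x (U ℝ m) ∧ eval x (U ℝ m) ≤ eval x (U ℝ ((m : ℤ) + 1)) := by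
  intro m
  induction m with
  | zero => simp [U_zero, U_one]; linarith
  | succ n ih =>
    obtain ⟨h1, h2⟩ := ih
    have hrec := U_eval_rec x n
    push_cast
    constructor
    · linarith
    · push_cast at hrec ⊢
      have h3 : ((n : ℤ) + 1 + 1) = (n : ℤ) + 2 := by ring
      rw [h3, hrec]
      nlinarith

lemma Xc_eq (g : ℝ) (hg0 : 0 < g) (hg : g < 1/4) :
    ∀ m : ℕ, Xc (m+1) (g : ℂ) =
      ((Real.sqrt g * eval (1/(2*Real.sqrt g)) (U ℝ m) /
        eval (1/(2*Real.sqrt g)) (U ℝ ((m : ℤ)+1)) : ℝ) : ℂ) := by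
  set s := Real.sqrt g with hs
  have hs0 : 0 < s := Real.sqrt_pos.2 hg0
  have hs2 : s^2 = g := Real.sq_sqrt hg0.le
  have hslt : s < 1/2 := by nlinarith [Real.sq_sqrt hg0.le]
  set x := 1/(2*s) with hx
  have hx1 : 1 < x := by
    rw [hx, lt_div_iff₀ (by linarith)]; linarith
  have hxs : 2 * x * s = 1 := by rw [hx]; field_simp
  intro m
  induction m with
  | zero =>
    show (g:ℂ) / (1 - Xc 0 (g:ℂ)) = _
    have hU0 : eval x (U ℝ (0:ℤ)) = 1 := by simp [U_zero]
    have hU1 : eval x (U ℝ ((0:ℤ)+1)) = 2*x := by norm_num [U_one]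
    rw [show ((0:ℕ):ℤ) = (0:ℤ) by norm_num, hU0, hU1]
    show (g:ℂ) / (1 - 0) = _
    rw [sub_zero, div_one]
    have : s * 1 / (2*x) = g := by
      field_simp
      nlinarith [hxs]
    rw [this]
  | succ n ih =>
    have hu := U_pos x hx1
    have h1 : 0 < eval x (U ℝ ((n:ℤ)+1)) := (hu n).1.trans_le (hu n).2
    have hrec := U_eval_rec x n
    have h2 : 0 < eval x (U ℝ ((n:ℤ)+2)) := by nlinarith [(hu n).1, (hu n).2]
    have key : s * eval x (U ℝ ((n:ℤ)+2)) = eval x (U ℝ ((n:ℤ)+1)) - s * eval x (U ℝ (n:ℤ)) := by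
      rw [hrec]; nlinarith [hxs]
    show (g:ℂ) / (1 - Xc (n+1) (g:ℂ)) = _
    rw [ih]
    rw [show (((n:ℕ)+1 : ℕ) : ℤ) = (n:ℤ)+1 by push_cast; ring]
    rw [show ((n:ℤ)+1)+1 = (n:ℤ)+2 by ring]
    set a := eval x (U ℝ (n:ℤ)) with ha
    set b := eval x (U ℝ ((n:ℤ)+1)) with hb
    set c := eval x (U ℝ ((n:ℤ)+2)) with hc
    have hbc : (b:ℂ) ≠ 0 := Complex.ofReal_ne_zero.2 h1.ne'
    have hcc : (c:ℂ) ≠ 0 := Complex.ofReal_ne_zero.2 h2.ne'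
    have hsc : (s:ℂ) ≠ 0 := Complex.ofReal_ne_zero.2 hs0.ne'
    have keyc : (s:ℂ) * c = (b:ℂ) - (s:ℂ) * a := by exact_mod_cast congrArg Complex.ofReal key
    have hgc : (g:ℂ) = (s:ℂ)^2 := by exact_mod_cast congrArg Complex.ofReal hs2.symm
    rw [Complex.ofReal_div, Complex.ofReal_div, Complex.ofReal_mul, Complex.ofReal_mul]
    have hden : (1:ℂ) - (s:ℂ)*a/b = (s:ℂ)*c/b := by
      field_simp
      linear_combination -keyc
    rw [hden, hgc]
    field_simp

lemma Yc_eq (g : ℝ) (hg0 : 0 < g) (hg : g < 1/4) :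
    ∀ m : ℕ, 1 ≤ m → Yc m (g : ℂ) =
      ((Real.sqrt g ^ m / eval (1/(2*Real.sqrt g)) (U ℝ (m : ℤ)) : ℝ) : ℂ) := by
  set s := Real.sqrt g with hs
  have hs0 : 0 < s := Real.sqrt_pos.2 hg0
  have hs2 : s^2 = g := Real.sq_sqrt hg0.le
  have hslt : s < 1/2 := by nlinarith [Real.sq_sqrt hg0.le]
  set x := 1/(2*s) with hx
  have hx1 : 1 < x := by
    rw [hx, lt_div_iff₀ (by linarith)]; linarith
  have hu := U_pos x hx1
  intro m hm
  induction m, hm using Nat.le_induction with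
  | base =>
    have : Yc 1 (g:ℂ) = Xc 1 (g:ℂ) := by simp [Yc]
    rw [this, Xc_eq g hg0 hg 0]
    have hU0 : eval x (U ℝ ((0:ℕ):ℤ)) = 1 := by
      norm_num [U_zero]
    rw [hU0, show ((0:ℕ):ℤ)+1 = ((1:ℕ):ℤ) by norm_num]
    norm_num
    rw [hs, hx]
    have hne : (Real.sqrt g : ℂ) ≠ 0 := Complex.ofReal_ne_zero.2 hs0.ne'
    push_cast
    field_simp
    rw [hs]
  | succ n hn ih =>
    have hstep : Yc (n+1) (g:ℂ) = Yc n (g:ℂ) * Xc (n+1) (g:ℂ) := by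
      rw [Yc, Yc, Finset.prod_Icc_succ_top (by omega : 1 ≤ n+1)]
    rw [hstep, ih, Xc_eq g hg0 hg n]
    rw [show (((n:ℕ)+1 : ℕ) : ℤ) = (n:ℤ)+1 by push_cast; ring]
    rw [← Complex.ofReal_mul]
    congr 1
    rw [← hs, ← hx]
    have hun : eval x (U ℝ (n:ℤ)) ≠ 0 := (hu n).1.ne'
    have hun1 : eval x (U ℝ ((n:ℤ)+1)) ≠ 0 := ((hu n).1.trans_le (hu n).2).ne'
    field_simp
    ring

/-- For every `m ≥ 1` and real `0 < g < 1/4`, one has `U_m(1/(2√g)) ≠ 0` and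
`Y_m(g) = (√g)^m / U_m(1/(2√g))`, with `U_m` the Chebyshev polynomial of the second kind. -/
theorem Yc_eq_chebyshevU (m : ℕ) (hm : 1 ≤ m) (g : ℝ) (hg0 : 0 < g) (hg : g < 1 / 4) :
    Polynomial.eval (1 / (2 * Real.sqrt g)) (Polynomial.Chebyshev.U ℝ (m : ℤ)) ≠ 0 ∧
      Yc m (g : ℂ) =
        (((Real.sqrt g) ^ m /
            Polynomial.eval (1 / (2 * Real.sqrt g)) (Polynomial.Chebyshev.U ℝ (m : ℤ)) : ℝ) : ℂ) := by
  have hs0 : 0 < Real.sqrt g := Real.sqrt_pos.2 hg0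
  have hslt : Real.sqrt g < 1/2 := by nlinarith [Real.sq_sqrt hg0.le]
  have hx1 : 1 < 1/(2*Real.sqrt g) := by
    rw [lt_div_iff₀ (by linarith)]; linarith
  exact ⟨(U_pos _ hx1 m).1.ne', Yc_eq g hg0 hg m hm⟩
end

section
/- For every integer m ≥ 1 there exists a real polynomial P_m of degree ⌊m/2⌋ with P_m(0) ≠ 0 such that P_m(g) · Y_m(g) = g^m for all real g with 0 < g < 1/4, where Y_m(g) = ∏_{k=1}^m X_k(g). -/
open scoped Real BigOperators

/-- Fibonacci-like polynomials: `F 0 = F 1 = 1`, `F (n+2) = F (n+1) - X * F n`. -/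
noncomputable def Fib : ℕ → Polynomial ℝ
  | 0 => 1
  | 1 => 1
  | (n + 2) => Fib (n + 1) - Polynomial.X * Fib n

lemma Fib_eval_zero (n : ℕ) : (Fib n).eval 0 = 1 := by
  induction n using Nat.strong_induction_on with
  | _ n ih =>
    match n with
    | 0 => simp [Fib]
    | 1 => simp [Fib]
    | (k + 2) =>
      simp [Fib, ih (k + 1) (by omega)]

lemma Fib_deg (n : ℕ) :
    (Fib n).natDegree ≤ n / 2 ∧ 0 < (-1 : ℝ) ^ (n / 2) * (Fib n).coeff (n / 2) := by
  induction n using Nat.strong_induction_on with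
  | _ n ih =>
    match n with
    | 0 => simp [Fib]
    | 1 => simp [Fib]
    | (k + 2) =>
      obtain ⟨hd1, hc1⟩ := ih (k + 1) (by omega)
      obtain ⟨hd0, hc0⟩ := ih k (by omega)
      have hdX : (Polynomial.X * Fib k).natDegree ≤ k / 2 + 1 := by
        refine le_trans (Polynomial.natDegree_mul_le) ?_
        simpa [Polynomial.natDegree_X, add_comm] using add_le_add_left hd0 1
      have hdeg : (Fib (k + 2)).natDegree ≤ (k + 2) / 2 := by
        have h2 : (k + 2) / 2 = k / 2 + 1 := by omega
        rw [h2, Fib]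
        refine le_trans (Polynomial.natDegree_sub_le _ _) ?_
        exact max_le (le_trans hd1 (by omega)) hdX
      refine ⟨hdeg, ?_⟩
      have hco : (Fib (k + 2)).coeff (k / 2 + 1) =
          (Fib (k + 1)).coeff (k / 2 + 1) - (Fib k).coeff (k / 2) := by
        rw [Fib, Polynomial.coeff_sub, Polynomial.coeff_X_mul]
      have h2 : (k + 2) / 2 = k / 2 + 1 := by omega
      rw [h2, hco]
      rcases Nat.even_or_odd k with hk | hk
      · -- k even: (k+1)/2 = k/2 < k/2 + 1, so top coeff of Fib (k+1) vanishes
        obtain ⟨j, rfl⟩ := hk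
        have hz : (Fib (j + j + 1)).coeff ((j + j) / 2 + 1) = 0 := by
          apply Polynomial.coeff_eq_zero_of_natDegree_lt
          have h3 : (j + j + 1) / 2 = (j + j) / 2 := by omega
          omega
        rw [hz]
        have key : (-1 : ℝ) ^ ((j + j) / 2 + 1) *
            (0 - (Fib (j + j)).coeff ((j + j) / 2)) =
            (-1 : ℝ) ^ ((j + j) / 2) * (Fib (j + j)).coeff ((j + j) / 2) := by ring
        rw [key]; exact hc0
      · -- k odd: (k+1)/2 = k/2 + 1
        have h1 : (k + 1) / 2 = k / 2 + 1 := by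
          obtain ⟨j, rfl⟩ := hk; omega
        rw [h1] at hc1
        have key : (-1 : ℝ) ^ (k / 2 + 1) *
            ((Fib (k + 1)).coeff (k / 2 + 1) - (Fib k).coeff (k / 2)) =
            (-1 : ℝ) ^ (k / 2 + 1) * (Fib (k + 1)).coeff (k / 2 + 1) +
            (-1 : ℝ) ^ (k / 2) * (Fib k).coeff (k / 2) := by ring
        rw [key]
        linarith [hc1, hc0]

lemma Fib_natDegree (n : ℕ) : (Fib n).natDegree = n / 2 := by
  obtain ⟨hle, hpos⟩ := Fib_deg n
  have hne : (Fib n).coeff (n / 2) ≠ 0 := by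
    intro h
    rw [h, mul_zero] at hpos
    exact lt_irrefl _ hpos
  exact le_antisymm hle (Polynomial.le_natDegree_of_ne_zero hne)

/-- For every `m ≥ 1` there is a real polynomial `P_m` of degree `⌊m/2⌋` with `P_m(0) ≠ 0`
such that `P_m(g) · Y_m(g) = g^m` for all real `0 < g < 1/4`. -/
theorem Yc_eq_rational (m : ℕ) (hm : 1 ≤ m) :
    ∃ P : Polynomial ℝ, P.natDegree = m / 2 ∧ P.eval 0 ≠ 0 ∧
      ∀ g : ℝ, 0 < g → g < 1 / 4 →
        ((P.eval g : ℝ) : ℂ) * Yc m (g : ℂ) = (g : ℂ) ^ m := by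
  refine ⟨Fib m, Fib_natDegree m, by rw [Fib_eval_zero]; norm_num, ?_⟩
  intro g hg0 hg4
  -- positivity of the evaluated polynomials
  have hpos : ∀ n : ℕ, 0 < (Fib n).eval g ∧
      2 * g * (Fib n).eval g < (Fib (n + 1)).eval g := by
    intro n
    induction n with
    | zero => simp [Fib]; linarith
    | succ k ihk =>
      obtain ⟨h0, h1⟩ := ihk
      have hev : (Fib (k + 2)).eval g =
          (Fib (k + 1)).eval g - g * (Fib k).eval g := by
        simp [Fib]
      have hf1 : 0 < (Fib (k + 1)).eval g := by nlinarith
      constructor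
      · exact hf1
      · rw [hev]
        have h2 : 0 < g * (Fib k).eval g := mul_pos hg0 h0
        have h3 : 0 < (1 / 4 - g) * (Fib (k + 1)).eval g :=
          mul_pos (by linarith) hf1
        nlinarith [h1, h2, h3]
  have hposn : ∀ n : ℕ, 0 < (Fib n).eval g := fun n => (hpos n).1
  have hne : ∀ n : ℕ, (Complex.ofReal ((Fib n).eval g)) ≠ 0 := by
    intro n
    exact_mod_cast (ne_of_gt (hposn n))
  -- X_{n+1}(g) = g * F_n(g) / F_{n+1}(g)
  have hX : ∀ n : ℕ, Xc (n + 1) (g : ℂ) =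
      (g : ℂ) * Complex.ofReal ((Fib n).eval g) / Complex.ofReal ((Fib (n + 1)).eval g) := by
    intro n
    induction n with
    | zero => simp [Xc, Fib]
    | succ k ihk =>
      have hev : Complex.ofReal ((Fib (k + 2)).eval g) =
          Complex.ofReal ((Fib (k + 1)).eval g) - (g : ℂ) * Complex.ofReal ((Fib k).eval g) := by
        push_cast [Fib, Polynomial.eval_sub, Polynomial.eval_mul, Polynomial.eval_X]
        ring
      have hk1 := hne (k + 1)
      have hk2 := hne (k + 2)
      rw [show Xc (k + 2) (g : ℂ) = (g : ℂ) / (1 - Xc (k + 1) (g : ℂ)) from rfl, ihk]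
      have hstep : (1 : ℂ) - (g : ℂ) * Complex.ofReal ((Fib k).eval g) /
          Complex.ofReal ((Fib (k + 1)).eval g) =
          Complex.ofReal ((Fib (k + 2)).eval g) / Complex.ofReal ((Fib (k + 1)).eval g) := by
        rw [hev]
        field_simp
      rw [hstep, div_div_eq_mul_div]
  -- telescoping product
  have hY : ∀ n : ℕ, (((Fib n).eval g : ℝ) : ℂ) * Yc n (g : ℂ) = (g : ℂ) ^ n := by
    intro n
    induction n with
    | zero => simp [Yc, Fib]
    | succ k ihk =>
      have hprod : Yc (k + 1) (g : ℂ) = Yc k (g : ℂ) * Xc (k + 1) (g : ℂ) := by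
        rw [Yc, Yc, Finset.prod_Icc_succ_top (by omega : 1 ≤ k + 1)]
      rw [hprod, hX k]
      have hk1 := hne (k + 1)
      calc (((Fib (k + 1)).eval g : ℝ) : ℂ) * (Yc k (g : ℂ) *
              ((g : ℂ) * Complex.ofReal ((Fib k).eval g) /
                Complex.ofReal ((Fib (k + 1)).eval g)))
          = (g : ℂ) * ((((Fib k).eval g : ℝ) : ℂ) * Yc k (g : ℂ)) := by
            field_simp
        _ = (g : ℂ) * (g : ℂ) ^ k := by rw [ihk]
        _ = (g : ℂ) ^ (k + 1) := by ring
  exact hY m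
end

section
/- Let m ≥ 2 and 1 ≤ k ≤ ⌊m/2⌋, and set g_{m,k} = (1/4)(1 + tan²(πk/(m+1))). Then the function g ↦ g^{m/2}/U_m(1/(2√g)), defined for real g > 1/4 with U_m(1/(2√g)) ≠ 0, satisfies lim_{g → g_{m,k}} (g − g_{m,k}) · g^{m/2}/U_m(1/(2√g)) = g_{m,k}^m · ((−1)^k/(m+1)) · g_{m,k}^{(1−m)/2} · tan²(πk/(m+1)); in particular g_{m,k} is a simple pole of the rational function g ↦ g^{m/2}/U_m(1/(2√g)) with the stated residue. -/
open scoped Real BigOperators Topology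

/-- Let `m ≥ 2`, `1 ≤ k ≤ ⌊m/2⌋` and `g_{m,k} = (1/4)(1 + tan²(πk/(m+1)))`. Then the
function `g ↦ g^{m/2}/U_m(1/(2√g))` has a simple pole at `g_{m,k}` with residue
`((−1)^k/(m+1)) · g_{m,k}^{(1−m)/2} · tan²(πk/(m+1))`, i.e.
`(g − g_{m,k})·g^{m/2}/U_m(1/(2√g)) → g_{m,k}^m · ((−1)^k/(m+1)) · g_{m,k}^{(1−m)/2} · tan²(πk/(m+1))`
as `g → g_{m,k}`. -/
theorem residue_of_chebyshev_pole (m k : ℕ) (hm : 2 ≤ m) (hk1 : 1 ≤ k) (hk2 : k ≤ m / 2)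
    (gmk : ℝ) (hgmk : gmk = (1 / 4) * (1 + Real.tan (Real.pi * k / (m + 1)) ^ 2)) :
    Filter.Tendsto
      (fun g : ℝ => (g - gmk) *
        ((Real.sqrt g) ^ m /
          Polynomial.eval (1 / (2 * Real.sqrt g)) (Polynomial.Chebyshev.U ℝ (m : ℤ))))
      (𝓝[≠] gmk)
      (𝓝 (gmk ^ m * ((-1 : ℝ) ^ k / (m + 1)) * gmk ^ ((1 - (m : ℝ)) / 2) *
        Real.tan (Real.pi * k / (m + 1)) ^ 2)) := by
  have hpi := Real.pi_pos
  set θ : ℝ := Real.pi * k / (m + 1) with hθdef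
  have hm1 : (0:ℝ) < (m:ℝ) + 1 := by positivity
  have hk0 : (0:ℝ) < (k:ℝ) := by exact_mod_cast hk1
  have h2k : (2*k : ℝ) ≤ (m:ℝ) := by
    have : 2 * k ≤ m := by omega
    exact_mod_cast this
  have hθpos : 0 < θ := by
    rw [hθdef]; positivity
  have hθlt : θ < Real.pi / 2 := by
    rw [hθdef, div_lt_div_iff₀ hm1 (by norm_num : (0:ℝ) < 2)]
    nlinarith
  have hcos : 0 < Real.cos θ :=
    Real.cos_pos_of_mem_Ioo ⟨by linarith, hθlt⟩
  have hsin : 0 < Real.sin θ :=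
    Real.sin_pos_of_pos_of_lt_pi hθpos (by linarith)
  -- gmk in terms of cos θ
  have hg : gmk = 1 / (4 * Real.cos θ ^ 2) := by
    have h := Real.inv_one_add_tan_sq hcos.ne'
    rw [hgmk]
    rw [show (1:ℝ) + Real.tan θ ^ 2 = ((1 + Real.tan θ ^ 2)⁻¹)⁻¹ by
      rw [inv_inv], h]
    field_simp
  have hgpos : 0 < gmk := by
    rw [hg]; positivity
  set s : ℝ := Real.sqrt gmk with hsdef
  have hs : s = 1 / (2 * Real.cos θ) := by
    rw [hsdef, hg, show (1:ℝ) / (4 * Real.cos θ ^ 2) = (1 / (2 * Real.cos θ))^2 by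
      field_simp; ring]
    exact Real.sqrt_sq (by positivity)
  have hspos : 0 < s := Real.sqrt_pos.mpr hgpos
  have hcoseq : (2 * s)⁻¹ = Real.cos θ := by
    rw [hs]; field_simp
  have hgs : gmk = s ^ 2 := (Real.sq_sqrt hgpos.le).symm
  -- angle facts
  have hangle : ((m:ℝ) + 1) * θ = k * Real.pi := by
    rw [hθdef]; field_simp
  have hsinm : Real.sin (((m:ℝ) + 1) * θ) = 0 := by
    rw [hangle]; exact Real.sin_nat_mul_pi k
  have hcosm : Real.cos (((m:ℝ) + 1) * θ) = (-1) ^ k := by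
    rw [hangle]
    simpa using Real.cos_nat_mul_pi_sub 0 k
  set P : Polynomial ℝ := Polynomial.Chebyshev.U ℝ (m : ℤ) with hPdef
  have hUeval : ∀ t : ℝ, P.eval (Real.cos t) * Real.sin t = Real.sin (((m:ℝ) + 1) * t) := by
    intro t
    have := Polynomial.Chebyshev.U_real_cos t (m : ℤ)
    push_cast at this
    exact this
  have hroot : P.eval (Real.cos θ) = 0 := by
    have h := hUeval θ
    rw [hsinm] at h
    exact (mul_eq_zero.mp h).resolve_right hsin.ne'
  -- derivative of U at cos θ
  have hUder : P.derivative.eval (Real.cos θ) =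
      -(((m:ℝ) + 1) * (-1) ^ k) / Real.sin θ ^ 2 := by
    have hd1 : HasDerivAt (fun t : ℝ => P.eval (Real.cos t) * Real.sin t)
        ((P.derivative.eval (Real.cos θ) * (-Real.sin θ)) * Real.sin θ +
          P.eval (Real.cos θ) * Real.cos θ) θ := by
      have hinner : HasDerivAt (fun t : ℝ => P.eval (Real.cos t))
          (P.derivative.eval (Real.cos θ) * (-Real.sin θ)) θ := by
        simpa [Function.comp_def] using
          (P.hasDerivAt (Real.cos θ)).comp θ (Real.hasDerivAt_cos θ)
      exact hinner.mul (Real.hasDerivAt_sin θ)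
    have hd2 : HasDerivAt (fun t : ℝ => Real.sin (((m:ℝ) + 1) * t))
        (Real.cos (((m:ℝ) + 1) * θ) * ((m:ℝ) + 1)) θ := by
      simpa [Function.comp_def] using (Real.hasDerivAt_sin (((m:ℝ) + 1) * θ)).comp θ
        ((hasDerivAt_id θ).const_mul ((m:ℝ) + 1))
    have hd2' : HasDerivAt (fun t : ℝ => P.eval (Real.cos t) * Real.sin t)
        (Real.cos (((m:ℝ) + 1) * θ) * ((m:ℝ) + 1)) θ :=
      hd2.congr_of_eventuallyEq (Filter.Eventually.of_forall hUeval)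
    have heq := hd1.unique hd2'
    rw [hroot, hcosm] at heq
    have hsinne : Real.sin θ ≠ 0 := hsin.ne'
    field_simp at heq ⊢
    linarith [heq]
  -- the denominator function and its derivative at gmk
  set c : ℝ := ((m:ℝ) + 1) * (-1) ^ k / (4 * s ^ 3 * Real.sin θ ^ 2) with hcdef
  have hcne : c ≠ 0 := by
    rw [hcdef]
    apply div_ne_zero
    · apply mul_ne_zero hm1.ne'
      exact pow_ne_zero _ (by norm_num)
    · positivity
  have hf0 : P.eval ((2 * s)⁻¹) = 0 := by rw [hcoseq]; exact hroot
  have hfderiv : HasDerivAt (fun g : ℝ => P.eval (1 / (2 * Real.sqrt g))) c gmk := by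
    have hsqrt := Real.hasDerivAt_sqrt hgpos.ne'
    have h2 : HasDerivAt (fun g : ℝ => 2 * Real.sqrt g) (2 * (1 / (2 * s))) gmk := by
      simpa using hsqrt.const_mul 2
    have h2ne : 2 * s ≠ 0 := by positivity
    have h3 : HasDerivAt (fun g : ℝ => (2 * Real.sqrt g)⁻¹)
        (-(2 * (1 / (2 * s))) / (2 * s) ^ 2) gmk := h2.inv h2ne
    have h4 : HasDerivAt (fun g : ℝ => P.eval ((2 * Real.sqrt g)⁻¹))
        (P.derivative.eval ((2 * s)⁻¹) * (-(2 * (1 / (2 * s))) / (2 * s) ^ 2)) gmk := by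
      simpa [Function.comp_def] using (P.hasDerivAt ((2 * s)⁻¹)).comp gmk h3
    have hcval : P.derivative.eval ((2 * s)⁻¹) * (-(2 * (1 / (2 * s))) / (2 * s) ^ 2) = c := by
      rw [hcoseq, hUder, hcdef]
      have hsinne : Real.sin θ ≠ 0 := hsin.ne'
      field_simp [hm1.ne']
      ring
    rw [← hcval]
    simpa [one_div] using h4
  -- slope limit
  have hslope : Filter.Tendsto (fun g : ℝ => P.eval (1 / (2 * Real.sqrt g)) / (g - gmk))
      (𝓝[≠] gmk) (𝓝 c) := by
    have h := hasDerivAt_iff_tendsto_slope.mp hfderiv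
    refine h.congr (fun g => ?_)
    rw [slope_def_field]
    rw [show (1:ℝ) / (2 * Real.sqrt gmk) = (2 * s)⁻¹ by rw [one_div]]
    rw [hf0, sub_zero]
  -- numerator limit
  have hN : Filter.Tendsto (fun g : ℝ => (Real.sqrt g) ^ m) (𝓝[≠] gmk) (𝓝 (s ^ m)) :=
    ((Real.continuous_sqrt.pow m).tendsto gmk).mono_left nhdsWithin_le_nhds
  have hdiv := hN.div hslope hcne
  have hmain : Filter.Tendsto
      (fun g : ℝ => (g - gmk) *
        ((Real.sqrt g) ^ m / P.eval (1 / (2 * Real.sqrt g))))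
      (𝓝[≠] gmk) (𝓝 (s ^ m / c)) := by
    refine hdiv.congr (fun g => ?_)
    simp only [Pi.div_apply]
    rw [div_div_eq_mul_div]
    ring
  -- identify the limit value
  have hval : gmk ^ m * ((-1 : ℝ) ^ k / (m + 1)) * gmk ^ ((1 - (m : ℝ)) / 2) *
      Real.tan θ ^ 2 = s ^ m / c := by
    have hhalf : gmk ^ ((1:ℝ)/2) = s := by
      rw [hsdef, Real.sqrt_eq_rpow]
    have hmhalf : gmk ^ ((m:ℝ)/2) = s ^ m := by
      rw [show (m:ℝ)/2 = (1/2) * (m:ℝ) by ring, Real.rpow_mul hgpos.le, hhalf,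
        Real.rpow_natCast]
    have hsplit : gmk ^ ((1 - (m:ℝ))/2) = s / s ^ m := by
      rw [show (1 - (m:ℝ))/2 = (1:ℝ)/2 - (m:ℝ)/2 by ring, Real.rpow_sub hgpos, hhalf, hmhalf]
    have hgm : gmk ^ m = (s ^ m) ^ 2 := by
      rw [hgs, ← pow_mul, ← pow_mul, mul_comm]
    rw [hsplit, hgm, Real.tan_eq_sin_div_cos, hcdef,
      show Real.cos θ = (2 * s)⁻¹ from hcoseq.symm]
    have hsinne : Real.sin θ ≠ 0 := hsin.ne'
    have hXne : s ^ m ≠ 0 := pow_ne_zero _ hspos.ne'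
    generalize s ^ m = X at hXne ⊢
    generalize Real.sin θ = Y at hsinne ⊢
    have hmc : (0:ℝ) ≤ (m:ℝ) := Nat.cast_nonneg m
    have hne2 : (-1 : ℝ) - (m:ℝ) ≠ 0 := by intro h; linarith
    have hne3 : (1 : ℝ) + (m:ℝ) ≠ 0 := by intro h; linarith
    rcases Nat.even_or_odd k with hpar | hpar
    · rw [hpar.neg_one_pow]
      field_simp [hm1.ne', hne2, hne3]
      try ring
      try linear_combination (X^2*s^3*Y^2*4) * (mul_inv_cancel₀ hne2)
    · rw [hpar.neg_one_pow]
      field_simp [hm1.ne', hne2, hne3]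
      try ring
      try linear_combination (X^2*s^3*Y^2*4) * (mul_inv_cancel₀ hne2)
  rw [hval]
  exact hmain
end

section
/- For every m ≥ 1, D_m is an odd analytic function on the open unit disc; writing its Taylor expansion at 0 as D_m(z) = Σ_{k=0}^∞ d_{m,2k+1} z^{2k+1}, one has d_{m,1} = m+1, and there exists a constant K > 0 independent of m and k such that |d_{m,2k+1}| ≤ K (m+1) m^{2k} for all m ≥ 1 and k ≥ 1. Equivalently, D_m(z) = (m+1)·z·(1 + Σ_{k≥1} b_{m,2k}(mz)^{2k}) with |b_{m,2k}| ≤ K. -/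
open scoped Real BigOperators

/-- `D_m(z) = ((1+z)/2)(1−z)^{−m} − ((1−z)/2)(1+z)^{−m}`. -/
noncomputable def Dm (m : ℕ) (z : ℂ) : ℂ :=
  (1 + z) / 2 * (1 - z) ^ (-(m : ℤ)) - (1 - z) / 2 * (1 + z) ^ (-(m : ℤ))

lemma choose_le_pow_aux : ∀ m n : ℕ, (n + m).choose m ≤ (m + 1) ^ n := by
  intro m
  induction m with
  | zero => intro n; simp
  | succ m ih =>
    intro n
    induction n with
    | zero => simp
    | succ n ihn =>
      have pascal : (n + 1 + (m + 1)).choose (m + 1)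
          = (n + (m + 1)).choose m + (n + (m + 1)).choose (m + 1) := by
        have : n + 1 + (m + 1) = (n + (m + 1)) + 1 := by ring
        rw [this, Nat.choose_succ_succ]
      rw [pascal]
      have h1 : (n + (m + 1)).choose m ≤ (m + 1) ^ (n + 1) := by
        have := ih (n + 1)
        simpa [show n + 1 + m = n + (m + 1) by ring] using this
      have h2 : (n + (m + 1)).choose (m + 1) ≤ (m + 2) ^ n := ihn
      have h3 : (m + 1) ^ (n + 1) ≤ (m + 1) * (m + 2) ^ n := by
        rw [pow_succ, mul_comm]
        exact Nat.mul_le_mul_left _ (Nat.pow_le_pow_left (by omega) n)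
      calc (n + (m + 1)).choose m + (n + (m + 1)).choose (m + 1)
          ≤ (m + 1) * (m + 2) ^ n + (m + 2) ^ n := by omega
        _ = (m + 2) ^ (n + 1) := by ring
/-- For every `m ≥ 1`, `D_m` is an odd analytic function on the open unit disc; writing
`D_m(z) = Σ_{k≥0} d_{m,2k+1} z^{2k+1}`, one has `d_{m,1} = m+1` and there is a constant
`K > 0`, independent of `m` and `k`, with `|d_{m,2k+1}| ≤ K(m+1)m^{2k}` for `k ≥ 1`;
equivalently `D_m(z) = (m+1)·z·(1 + Σ_{k≥1} b_{m,2k}(mz)^{2k})` with `|b_{m,2k}| ≤ K`. -/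
theorem Dm_odd_expansion :
    ∃ K : ℝ, 0 < K ∧ ∃ d : ℕ → ℕ → ℂ,
      ∀ m : ℕ, 1 ≤ m →
        AnalyticOnNhd ℂ (Dm m) (Metric.ball (0 : ℂ) 1) ∧
        (∀ z : ℂ, ‖z‖ < 1 → Dm m (-z) = -Dm m z) ∧
        (∀ z : ℂ, ‖z‖ < 1 →
          HasSum (fun k : ℕ => d m k * z ^ (2 * k + 1)) (Dm m z)) ∧
        d m 0 = (m : ℂ) + 1 ∧
        (∀ k : ℕ, 1 ≤ k → ‖d m k‖ ≤ K * (m + 1) * (m : ℝ) ^ (2 * k)) := by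
  refine ⟨1, one_pos, fun m k =>
    (((2*k + (m-1)).choose (m-1) + (2*k + 1 + (m-1)).choose (m-1) : ℕ) : ℂ), fun m hm => ?_⟩
  obtain ⟨M, rfl⟩ : ∃ M, m = M + 1 := ⟨m - 1, by omega⟩
  simp only [Nat.add_sub_cancel]
  have hDm : Dm (M+1) = fun z : ℂ =>
      (1 + z) / 2 * (1 / (1 - z) ^ (M+1)) - (1 - z) / 2 * (1 / (1 + z) ^ (M+1)) := by
    funext z
    simp only [Dm, zpow_neg, zpow_natCast, one_div]
  constructor
  · -- analyticity
    intro z hz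
    have hz' : ‖z‖ < 1 := by simpa [Complex.dist_eq] using hz
    have h1 : (1 : ℂ) - z ≠ 0 := by
      intro h
      have : z = 1 := by linear_combination -h
      simp [this] at hz'
    have h2 : (1 : ℂ) + z ≠ 0 := by
      intro h
      have : z = -1 := by linear_combination h
      simp [this] at hz'
    rw [hDm]
    apply AnalyticAt.sub
    · exact (((analyticAt_const.add analyticAt_id).div analyticAt_const two_ne_zero).mul
        ((analyticAt_const.div ((analyticAt_const.sub analyticAt_id).pow _)
          (pow_ne_zero _ h1))))
    · exact (((analyticAt_const.sub analyticAt_id).div analyticAt_const two_ne_zero).mul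
        ((analyticAt_const.div ((analyticAt_const.add analyticAt_id).pow _)
          (pow_ne_zero _ h2))))
  refine ⟨fun z _ => by simp only [Dm]; ring_nf, ?_, ?_, ?_⟩
  · -- HasSum
    intro z hz
    have hz' : ‖z‖ < 1 := hz
    have hz'' : ‖-z‖ < 1 := by simpa using hz
    have h1 : HasSum (fun n : ℕ => ((n + M).choose M : ℂ) * z ^ n) (1 / (1 - z) ^ (M+1)) :=
      hasSum_choose_mul_geometric_of_norm_lt_one M hz'
    have h2 : HasSum (fun n : ℕ => ((n + M).choose M : ℂ) * (-z) ^ n) (1 / (1 + z) ^ (M+1)) := by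
      have := hasSum_choose_mul_geometric_of_norm_lt_one M hz''
      simpa [sub_neg_eq_add] using this
    set f : ℕ → ℂ := fun n => (1 + z) / 2 * (((n + M).choose M : ℂ) * z ^ n)
      - (1 - z) / 2 * (((n + M).choose M : ℂ) * (-z) ^ n) with hf_def
    have hf : HasSum f (Dm (M+1) z) := by
      rw [hDm]
      exact (h1.mul_left _).sub (h2.mul_left _)
    have hE : Summable fun k => f (2 * k) :=
      hf.summable.comp_injective (fun a b h => by omega)
    have hO : Summable fun k => f (2 * k + 1) :=
      hf.summable.comp_injective (fun a b h => by omega)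
    have hAB : HasSum f (∑' k, f (2 * k) + ∑' k, f (2 * k + 1)) :=
      HasSum.even_add_odd hE.hasSum hO.hasSum
    have hsum : HasSum (fun k => f (2 * k) + f (2 * k + 1))
        (∑' k, f (2 * k) + ∑' k, f (2 * k + 1)) := hE.hasSum.add hO.hasSum
    rw [hAB.unique hf] at hsum
    convert hsum using 2 with k
    have e1 : (-z) ^ (2 * k) = z ^ (2 * k) := Even.neg_pow (even_two_mul k) z
    have e2 : (-z) ^ (2 * k + 1) = -(z ^ (2 * k + 1)) := Odd.neg_pow (odd_two_mul_add_one k) z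
    simp only [hf_def, e1, e2]
    push_cast
    ring
  · -- d m 0
    have h0 : (1 + M).choose M = M + 1 := by
      rw [Nat.add_comm]; exact Nat.choose_succ_self_right M
    simp [h0]
    ring
  · -- bound
    intro k _
    have b1 : (2*k + M).choose M ≤ (M + 1) ^ (2*k) := choose_le_pow_aux M (2*k)
    have b2 : (2*k + 1 + M).choose M ≤ (M + 1) ^ (2*k+1) := choose_le_pow_aux M (2*k+1)
    rw [Complex.norm_natCast]
    have : ((2*k + M).choose M + (2*k + 1 + M).choose M : ℕ)
        ≤ (M + 1) ^ (2*k) + (M + 1) * (M + 1) ^ (2*k) := by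
      have : (M + 1) ^ (2*k+1) = (M + 1) * (M + 1) ^ (2*k) := by ring
      omega
    calc (((2*k + M).choose M + (2*k + 1 + M).choose M : ℕ) : ℝ)
        ≤ ((M + 1) ^ (2*k) + (M + 1) * (M + 1) ^ (2*k) : ℕ) := by exact_mod_cast this
      _ = 1 * (((M + 1 : ℕ) : ℝ) + 1) * ((M + 1 : ℕ) : ℝ) ^ (2 * k) := by push_cast; ring
end

section
/- For every a > 0 and every ε ∈ (0,1) there exist constants K₀, K₁, δ₀ > 0 and m₀ ∈ ℕ such that for all z ∈ V_a with |z| < δ₀ and all m ≥ m₀, writing x = Re z (so x > 0), one has sinh(mx) ≤ |sinh(mz)| ≤ K₀ sinh(mx) and (1/2) sinh((1−ε)mx) ≤ |D_m(z)| ≤ K₁ sinh((1+ε)mx). -/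
open scoped Real BigOperators

/-- The wedge `V_a = {z ∈ ℂ : |Im z| < a·Re z}`. -/
def wedge (a : ℝ) : Set ℂ := {z : ℂ | |z.im| < a * z.re}

private lemma le_of_sq_le_sq'' {a b : ℝ} (h : a ^ 2 ≤ b ^ 2) (hb : 0 ≤ b) : a ≤ b := by
  nlinarith [abs_nonneg a, sq_abs a, le_abs_self a]

private lemma abs_sinh_sq' (u v : ℝ) :
    ‖Complex.sinh (↑u + ↑v * Complex.I)‖ ^ 2 = Real.sinh u ^ 2 + Real.sin v ^ 2 := by
  have h : Complex.sinh (↑u + ↑v * Complex.I)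
      = ↑(Real.sinh u * Real.cos v) + ↑(Real.cosh u * Real.sin v) * Complex.I := by
    rw [Complex.sinh_add, Complex.sinh_mul_I, Complex.cosh_mul_I]
    push_cast
    ring
  rw [h, Complex.sq_norm, Complex.normSq_add_mul_I]
  nlinarith [Real.sin_sq_add_cos_sq v, Real.cosh_sq u]

private lemma part1 (a : ℝ) (ha : 0 < a) (z : ℂ) (hz : |z.im| < a * z.re) (m : ℕ)
    (hm : 1 ≤ m) :
    Real.sinh (m * z.re) ≤ ‖Complex.sinh (m * z)‖ ∧
      ‖Complex.sinh (m * z)‖ ≤ (1 + a) * Real.sinh (m * z.re) := by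
  have hx : 0 < z.re := by
    rcases le_or_gt z.re 0 with h | h
    · exfalso; nlinarith [abs_nonneg z.im]
    · exact h
  have hm1 : (1 : ℝ) ≤ m := by exact_mod_cast hm
  have hmx : 0 < (m : ℝ) * z.re := by positivity
  have hmz : (m : ℂ) * z = ↑((m : ℝ) * z.re) + ↑((m : ℝ) * z.im) * Complex.I := by
    simp [Complex.ext_iff]
  have hsq := abs_sinh_sq' ((m : ℝ) * z.re) ((m : ℝ) * z.im)
  rw [← hmz] at hsq
  have hsh : 0 < Real.sinh ((m : ℝ) * z.re) := Real.sinh_pos_iff.2 hmx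
  constructor
  · refine le_of_sq_le_sq'' ?_ (norm_nonneg _)
    nlinarith [sq_nonneg (Real.sin ((m : ℝ) * z.im))]
  · refine le_of_sq_le_sq'' ?_ (by positivity)
    have h1 : Real.sin ((m : ℝ) * z.im) ^ 2 ≤ ((m : ℝ) * z.im) ^ 2 := by
      have h := Real.abs_sin_le_abs (x := (m : ℝ) * z.im)
      calc Real.sin ((m : ℝ) * z.im) ^ 2 = |Real.sin ((m : ℝ) * z.im)| ^ 2 := (sq_abs _).symm
        _ ≤ |(m : ℝ) * z.im| ^ 2 := by gcongr
        _ = ((m : ℝ) * z.im) ^ 2 := sq_abs _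
    have h2 : ((m : ℝ) * z.im) ^ 2 ≤ (a * ((m : ℝ) * z.re)) ^ 2 := by
      have hy : |z.im| ≤ a * z.re := le_of_lt hz
      have hy2 : z.im ^ 2 ≤ (a * z.re) ^ 2 := by
        nlinarith [sq_abs z.im, abs_nonneg z.im]
      nlinarith [sq_nonneg (m : ℝ)]
    have h3 : (m : ℝ) * z.re < Real.sinh ((m : ℝ) * z.re) := Real.self_lt_sinh_iff.2 hmx
    have h4 : (a * ((m : ℝ) * z.re)) ^ 2 ≤ (a * Real.sinh ((m : ℝ) * z.re)) ^ 2 := by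
      have := mul_le_mul_of_nonneg_left h3.le ha.le
      nlinarith only [this, mul_pos ha hmx, ha, hmx, hsh]
    nlinarith only [hsq, h1, h2, h4, hsh, ha, mul_pos ha (mul_pos hsh hsh)]

set_option maxHeartbeats 2000000 in
/-- For every `a > 0` and `ε ∈ (0,1)` there are `K₀, K₁, δ₀ > 0` and `m₀ ∈ ℕ` such that for
all `z ∈ V_a` with `|z| < δ₀` and all `m ≥ m₀`, writing `x = Re z`,
`sinh(mx) ≤ |sinh(mz)| ≤ K₀ sinh(mx)` and `(1/2)sinh((1−ε)mx) ≤ |D_m(z)| ≤ K₁ sinh((1+ε)mx)`. -/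
theorem sinh_Dm_bounds (a : ℝ) (ha : 0 < a) (ε : ℝ) (hε0 : 0 < ε) (hε1 : ε < 1) :
    ∃ K₀ K₁ δ₀ : ℝ, 0 < K₀ ∧ 0 < K₁ ∧ 0 < δ₀ ∧ ∃ m₀ : ℕ,
      ∀ z : ℂ, z ∈ wedge a → ‖z‖ < δ₀ → ∀ m : ℕ, m₀ ≤ m →
        (Real.sinh (m * z.re) ≤ ‖Complex.sinh (m * z)‖ ∧
          ‖Complex.sinh (m * z)‖ ≤ K₀ * Real.sinh (m * z.re)) ∧
        ((1 / 2) * Real.sinh ((1 - ε) * m * z.re) ≤ ‖Dm m z‖ ∧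
          ‖Dm m z‖ ≤ K₁ * Real.sinh ((1 + ε) * m * z.re)) := by
  have hc0 : (0:ℝ) < 1 + a := by linarith
  refine ⟨1 + a, 4 * (1 + a) * (Real.exp (4 * (1 + a)) + 2) + (1 + a) + 6,
    min (min (2 * ε / (1 + a) ^ 2) (ε / (2 * (1 + ε)))) (1 / 2), by linarith, by positivity,
    by positivity, ⌈(1 + a) / (1 - ε)⌉₊ + 1, ?_⟩
  intro z hz hzδ m hm
  set x := z.re with hxdef
  set y := z.im with hydef
  set r := ‖z‖ with hrdef
  have hwz : |y| < a * x := hz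
  have hx : 0 < x := by
    rcases le_or_gt x 0 with h | h
    · exfalso; nlinarith [abs_nonneg y]
    · exact h
  have hm1 : 1 ≤ m := le_trans (Nat.le_add_left 1 _) hm
  have hm1' : (1 : ℝ) ≤ m := by exact_mod_cast hm1
  have hmε : (1 + a) / (1 - ε) ≤ (m : ℝ) := by
    have h1 : (1 + a) / (1 - ε) ≤ (⌈(1 + a) / (1 - ε)⌉₊ : ℝ) := Nat.le_ceil _
    have h2 : (⌈(1 + a) / (1 - ε)⌉₊ : ℝ) ≤ (m : ℝ) := by
      have : ⌈(1 + a) / (1 - ε)⌉₊ ≤ m := le_trans (Nat.le_succ _) hm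
      exact_mod_cast this
    linarith
  have hmc : (1 + a) ≤ (1 - ε) * m := by
    rw [div_le_iff₀ (by linarith)] at hmε
    linarith [hmε]
  -- basic size facts
  have hxr : x ≤ r := Complex.re_le_norm z
  have hrcx : r ≤ (1 + a) * x := by
    refine le_of_sq_le_sq'' ?_ (by positivity)
    have hrs : r ^ 2 = x ^ 2 + y ^ 2 := by
      rw [hrdef, Complex.sq_norm, Complex.normSq_apply]; ring
    have hy2' : y ^ 2 ≤ (a * x) ^ 2 := by
      have h := pow_le_pow_left₀ (abs_nonneg y) hwz.le 2
      rwa [sq_abs] at h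
    nlinarith only [hrs, hy2', ha, hx, mul_pos ha hx, mul_pos (mul_pos ha hx) hx,
      sq_nonneg x]
  have hr12 : r ≤ 1 / 2 := le_of_lt (lt_of_lt_of_le hzδ (min_le_right _ _))
  have hx1 : (1 + a) ^ 2 * x ≤ 2 * ε := by
    have : x < 2 * ε / (1 + a) ^ 2 :=
      lt_of_le_of_lt hxr (lt_of_lt_of_le hzδ (le_trans (min_le_left _ _) (min_le_left _ _)))
    have hc2 : (0:ℝ) < (1 + a) ^ 2 := by positivity
    rw [lt_div_iff₀ hc2] at this
    linarith
  have hx2 : x * (2 * (1 + ε)) ≤ ε := by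
    have : x < ε / (2 * (1 + ε)) :=
      lt_of_le_of_lt hxr (lt_of_lt_of_le hzδ (le_trans (min_le_left _ _) (min_le_right _ _)))
    have h2 : (0:ℝ) < 2 * (1 + ε) := by linarith
    rw [lt_div_iff₀ h2] at this
    linarith
  have hx12 : x ≤ 1 / 2 := le_trans hxr hr12
  refine ⟨part1 a ha z hwz m hm1, ?_⟩
  -- Part 2
  have h1z : (1 : ℂ) - z ≠ 0 := by
    intro h
    have : ‖1 - z‖ = 0 := by rw [h]; simp
    have h1 : (1:ℝ) - r ≤ ‖1 - z‖ := by
      have := norm_sub_norm_le (1 : ℂ) z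
      simpa using this
    rw [this] at h1; linarith
  have h2z : (1 : ℂ) + z ≠ 0 := by
    intro h
    have : ‖1 + z‖ = 0 := by rw [h]; simp
    have h1 : (1:ℝ) - r ≤ ‖1 + z‖ := by
      have := norm_sub_norm_le (1 : ℂ) (-z)
      simpa [sub_neg_eq_add] using this
    rw [this] at h1; linarith
  set A1 := ‖1 - z‖ with hA1
  set A2 := ‖1 + z‖ with hA2
  have hA1pos : 0 < A1 := by
    rw [hA1]; exact (norm_pos_iff.2 h1z)
  have hA2pos : 0 < A2 := by
    rw [hA2]; exact (norm_pos_iff.2 h2z)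
  set L1 := Real.log A1 with hL1
  set L2 := Real.log A2 with hL2
  set t : ℝ := (m : ℝ) * x with ht
  have ht0 : 0 < t := by positivity
  have hA1sq : A1 ^ 2 = (1 - x) ^ 2 + y ^ 2 := by
    rw [hA1, Complex.sq_norm, Complex.normSq_apply]
    simp [hxdef, hydef]
    ring
  have hA2sq : A2 ^ 2 = (1 + x) ^ 2 + y ^ 2 := by
    rw [hA2, Complex.sq_norm, Complex.normSq_apply]
    simp [hxdef, hydef]
    ring
  have hy2 : y ^ 2 ≤ (a * x) ^ 2 := by
    have h := pow_le_pow_left₀ (abs_nonneg y) hwz.le 2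
    rwa [sq_abs] at h
  have hA1le : A1 ≤ 1 + r := by
    have := norm_sub_le (1 : ℂ) z
    simpa using this
  have hA2le : A2 ≤ 1 + r := by
    have := norm_add_le (1 : ℂ) z
    simpa using this
  have hA2ge : 1 + x ≤ A2 := by
    have := Complex.re_le_norm (1 + z)
    simpa [Complex.add_re] using this
  -- the four log bounds
  have hL1le : L1 ≤ -((1 - ε) * x) := by
    have hx1x : (1 + a) ^ 2 * x * x ≤ 2 * ε * x := mul_le_mul_of_nonneg_right hx1 hx.le
    have hA1' : A1 ≤ 1 - (1 - ε) * x := by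
      refine le_of_sq_le_sq'' ?_
        (by nlinarith only [hx12, hx, mul_pos hε0 hx])
      rw [hA1sq]
      nlinarith only [hy2, hx1x, sq_nonneg ((1 - ε) * x),
        mul_nonneg (mul_nonneg ha.le hx.le) hx.le]
    have := Real.log_le_sub_one_of_pos hA1pos
    linarith
  have hL1ge : -((1 + ε) * x) ≤ L1 := by
    rw [hL1, Real.le_log_iff_exp_le hA1pos]
    have hA1' : 1 - x ≤ A1 := by
      refine le_of_sq_le_sq'' ?_ (le_of_lt hA1pos)
      rw [hA1sq]; nlinarith only [hA1sq, sq_nonneg y]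
    have he : Real.exp (-((1 + ε) * x)) ≤ 1 - x := by
      have h1 := Real.add_one_le_exp ((1 + ε) * x)
      rw [Real.exp_neg]
      have hp : 0 < (1 + ε) * x + 1 := by nlinarith only [hx, hε0, mul_pos hε0 hx]
      have h2 : (Real.exp ((1 + ε) * x))⁻¹ ≤ ((1 + ε) * x + 1)⁻¹ := by
        apply inv_anti₀ hp h1
      refine le_trans h2 ?_
      rw [inv_eq_one_div, div_le_iff₀ hp]
      nlinarith only [mul_le_mul_of_nonneg_right hx2 hx.le, mul_pos hε0 hx, hx, hε0]
    linarith
  have hL2ge : (1 - ε) * x ≤ L2 := by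
    rw [hL2, Real.le_log_iff_exp_le hA2pos]
    have he : Real.exp ((1 - ε) * x) ≤ 1 + x := by
      have h1 := Real.add_one_le_exp (-((1 - ε) * x))
      rw [Real.exp_neg] at h1
      have hep : 0 < Real.exp ((1 - ε) * x) := Real.exp_pos _
      have h2 : Real.exp ((1 - ε) * x) * (1 - (1 - ε) * x) ≤ 1 := by
        have h3 : 1 - (1 - ε) * x ≤ (Real.exp ((1 - ε) * x))⁻¹ := by linarith
        calc Real.exp ((1 - ε) * x) * (1 - (1 - ε) * x)
            ≤ Real.exp ((1 - ε) * x) * (Real.exp ((1 - ε) * x))⁻¹ := by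
              apply mul_le_mul_of_nonneg_left h3 (le_of_lt hep)
          _ = 1 := mul_inv_cancel₀ (ne_of_gt hep)
      have h4 : 1 ≤ (1 + x) * (1 - (1 - ε) * x) := by
        nlinarith only [mul_le_mul_of_nonneg_right hx2 hx.le, mul_pos hε0 hx,
          mul_nonneg hε0.le (sq_nonneg x), sq_nonneg x, hx, hε0, hε1]
      have h5 : 0 < 1 - (1 - ε) * x := by
        nlinarith only [hx12, mul_pos hε0 hx]
      nlinarith only [h2, h4, h5, hep]
    exact le_trans he hA2ge
  have hL2le : L2 ≤ (1 + ε) * x := by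
    have hx1x : (1 + a) ^ 2 * x * x ≤ 2 * ε * x := mul_le_mul_of_nonneg_right hx1 hx.le
    have hA2' : A2 ≤ 1 + (1 + ε) * x := by
      refine le_of_sq_le_sq'' ?_ (by nlinarith only [hx, mul_pos hε0 hx])
      rw [hA2sq]
      nlinarith only [hy2, hx1x, sq_nonneg ((1 + ε) * x),
        mul_nonneg (mul_nonneg ha.le hx.le) hx.le]
    have := Real.log_le_sub_one_of_pos hA2pos
    linarith
  have hL2pos : 0 ≤ L2 :=
    le_trans (by nlinarith only [hx, hε0, hε1, mul_pos hε0 hx] : (0:ℝ) ≤ (1 - ε) * x) hL2ge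
  -- rewrite Dm via exponentials
  set w : ℂ := -Complex.log (1 - z) with hw
  set v : ℂ := Complex.log (1 + z) with hv
  have e1 : Complex.exp ((m : ℂ) * Complex.log (1 - z)) = (1 - z) ^ m := by
    rw [Complex.exp_nat_mul, Complex.exp_log h1z]
  have e2 : Complex.exp ((m : ℂ) * Complex.log (1 + z)) = (1 + z) ^ m := by
    rw [Complex.exp_nat_mul, Complex.exp_log h2z]
  have hDm : Dm m z = (1 + z) / 2 * Complex.exp ((m : ℂ) * w)
      - (1 - z) / 2 * Complex.exp (-((m : ℂ) * v)) := by
    unfold Dm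
    rw [zpow_neg, zpow_neg, zpow_natCast, zpow_natCast, ← e1, ← e2, ← Complex.exp_neg,
      ← Complex.exp_neg, hw, hv]
    ring_nf
  -- abs of the two terms
  have habs1 : ‖(1 + z) / 2 * Complex.exp ((m : ℂ) * w)‖
      = A2 / 2 * Real.exp ((m : ℝ) * (-L1)) := by
    rw [norm_mul, norm_div, Complex.norm_exp, Complex.norm_two]
    congr 2
    simp [hw, Complex.log_re, hL1, hA1]
  have habs2 : ‖(1 - z) / 2 * Complex.exp (-((m : ℂ) * v))‖
      = A1 / 2 * Real.exp (-((m : ℝ) * L2)) := by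
    rw [norm_mul, norm_div, Complex.norm_exp, Complex.norm_two]
    congr 2
    simp [hv, Complex.log_re, hL2, hA2]
  have hexp1ge : Real.exp ((1 - ε) * t) ≤ Real.exp ((m : ℝ) * (-L1)) := by
    apply Real.exp_le_exp.2
    rw [ht]
    have := mul_le_mul_of_nonneg_left hL1le (by positivity : (0:ℝ) ≤ (m:ℝ))
    nlinarith only [this]
  have hexp2le : Real.exp (-((m : ℝ) * L2)) ≤ Real.exp (-((1 - ε) * t)) := by
    apply Real.exp_le_exp.2
    rw [ht]
    have := mul_le_mul_of_nonneg_left hL2ge (by positivity : (0:ℝ) ≤ (m:ℝ))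
    nlinarith only [this]
  have hexp2le1 : Real.exp (-((m : ℝ) * L2)) ≤ 1 := by
    rw [Real.exp_le_one_iff]
    have : (0:ℝ) ≤ (m:ℝ) * L2 := mul_nonneg (by positivity) hL2pos
    linarith
  have hsinhβ : Real.sinh ((1 - ε) * t)
      = (Real.exp ((1 - ε) * t) - Real.exp (-((1 - ε) * t))) / 2 := Real.sinh_eq _
  have hβt : 0 < (1 - ε) * t := mul_pos (by linarith) ht0
  have hexpβle1 : Real.exp (-((1 - ε) * t)) ≤ 1 := by
    rw [Real.exp_le_one_iff]; linarith
  have hrsinh : r ≤ Real.sinh ((1 - ε) * t) := by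
    have h1 : r ≤ (1 - ε) * t := by
      rw [ht]
      calc r ≤ (1 + a) * x := hrcx
        _ ≤ ((1 - ε) * m) * x := mul_le_mul_of_nonneg_right hmc hx.le
        _ = (1 - ε) * ((m : ℝ) * x) := by ring
    exact le_trans h1 (le_of_lt (Real.self_lt_sinh_iff.2 hβt))
  constructor
  · -- lower bound on |Dm|
    have htri : A2 / 2 * Real.exp ((m : ℝ) * (-L1)) - A1 / 2 * Real.exp (-((m : ℝ) * L2))
        ≤ ‖Dm m z‖ := by
      rw [hDm, ← habs1, ← habs2]
      have := norm_sub_norm_le ((1 + z) / 2 * Complex.exp ((m : ℂ) * w))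
        ((1 - z) / 2 * Complex.exp (-((m : ℂ) * v)))
      simpa using this
    have h1 : 1 / 2 * Real.exp ((1 - ε) * t)
        ≤ A2 / 2 * Real.exp ((m : ℝ) * (-L1)) := by
      have : (1:ℝ) ≤ A2 := by linarith
      have he := Real.exp_pos ((1 - ε) * t)
      calc 1 / 2 * Real.exp ((1 - ε) * t) ≤ 1 / 2 * Real.exp ((m : ℝ) * (-L1)) := by
            apply mul_le_mul_of_nonneg_left hexp1ge; norm_num
        _ ≤ A2 / 2 * Real.exp ((m : ℝ) * (-L1)) := by
            apply mul_le_mul_of_nonneg_right _ (le_of_lt (Real.exp_pos _))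
            linarith
    have h2 : A1 / 2 * Real.exp (-((m : ℝ) * L2))
        ≤ (1 + r) / 2 * Real.exp (-((1 - ε) * t)) := by
      apply mul_le_mul (by linarith) hexp2le (le_of_lt (Real.exp_pos _)) (by positivity)
    have key : (1 / 2) * Real.sinh ((1 - ε) * t)
        ≤ 1 / 2 * Real.exp ((1 - ε) * t) - (1 + r) / 2 * Real.exp (-((1 - ε) * t)) := by
      rw [hsinhβ]
      have hrexp : r * Real.exp (-((1 - ε) * t)) ≤ r := by
        nlinarith only [norm_nonneg z, hexpβle1]
      nlinarith only [hrsinh, hsinhβ, hrexp, Real.exp_pos (-((1 - ε) * t))]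
    have : (1 / 2) * Real.sinh ((1 - ε) * t) ≤ ‖Dm m z‖ := by linarith
    calc (1 / 2) * Real.sinh ((1 - ε) * ↑m * x) = (1 / 2) * Real.sinh ((1 - ε) * t) := by
          rw [ht]; ring_nf
      _ ≤ ‖Dm m z‖ := this
  · -- upper bound on |Dm|
    have hγt0 : 0 < (1 + ε) * t := mul_pos (by linarith) ht0
    have hγt : t ≤ (1 + ε) * t := by nlinarith only [ht0, mul_pos hε0 ht0]
    have hsinhγ0 : 0 ≤ Real.sinh ((1 + ε) * t) := (Real.sinh_pos_iff.2 hγt0).le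
    have hsinhγ : (1 + ε) * t ≤ Real.sinh ((1 + ε) * t) := (Real.self_lt_sinh_iff.2 hγt0).le
    have hgoalrw : (1 + ε) * ↑m * x = (1 + ε) * t := by rw [ht]; ring
    rw [hgoalrw]
    have hA2le' : A2 / 2 ≤ 3 / 4 := by linarith
    have hxt : x ≤ t := by nlinarith only [hm1', hx, ht]
    have htri : ‖Dm m z‖
        ≤ A2 / 2 * Real.exp ((m : ℝ) * (-L1)) + A1 / 2 * Real.exp (-((m : ℝ) * L2)) := by
      rw [hDm, ← habs1, ← habs2]
      have := norm_sub_le ((1 + z) / 2 * Complex.exp ((m : ℂ) * w))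
        ((1 - z) / 2 * Complex.exp (-((m : ℂ) * v)))
      simpa using this
    have hK6 : (0:ℝ) ≤ 4 * (1 + a) * (Real.exp (4 * (1 + a)) + 2) + (1 + a) := by positivity
    rcases lt_or_ge 1 t with htl | hts
    · -- large t
      have hexp1le : Real.exp ((m : ℝ) * (-L1)) ≤ Real.exp ((1 + ε) * t) := by
        apply Real.exp_le_exp.2
        rw [ht]
        have := mul_le_mul_of_nonneg_left (neg_le_neg hL1ge) (by positivity : (0:ℝ) ≤ (m:ℝ))
        nlinarith only [this]
      have h2e : (2:ℝ) ≤ Real.exp 1 := by nlinarith only [Real.add_one_le_exp 1]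
      have hu1 : 1 ≤ (1 + ε) * t := by nlinarith only [htl, ht0, mul_pos hε0 ht0]
      have he1 : Real.exp (-((1 + ε) * t)) ≤ 1 / 2 := by
        have h3 : Real.exp (-((1 + ε) * t)) ≤ Real.exp (-1) :=
          Real.exp_le_exp.2 (by linarith)
        have h4 : Real.exp (-1) ≤ 1 / 2 := by
          rw [Real.exp_neg]
          rw [inv_le_comm₀ (Real.exp_pos 1) (by norm_num)]
          rw [show ((1:ℝ)/2)⁻¹ = 2 by norm_num]
          exact h2e
        linarith
      have he2 : 1 ≤ Real.exp ((1 + ε) * t) := Real.one_le_exp (by linarith)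
      have hsinh_exp : Real.exp ((1 + ε) * t) ≤ 4 * Real.sinh ((1 + ε) * t) := by
        rw [Real.sinh_eq]
        linarith
      have hbd : ‖Dm m z‖ ≤ 3 / 2 * Real.exp ((1 + ε) * t) := by
        have t1 : A2 / 2 * Real.exp ((m : ℝ) * (-L1)) ≤ 3 / 4 * Real.exp ((1 + ε) * t) := by
          apply mul_le_mul hA2le' hexp1le (Real.exp_pos _).le (by norm_num)
        have t2 : A1 / 2 * Real.exp (-((m : ℝ) * L2)) ≤ 3 / 4 := by
          have : A1 / 2 ≤ 3 / 4 := by linarith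
          nlinarith only [this, hexp2le1, Real.exp_pos (-((m : ℝ) * L2)), hA1pos]
        calc ‖Dm m z‖
            ≤ A2 / 2 * Real.exp ((m : ℝ) * (-L1)) + A1 / 2 * Real.exp (-((m : ℝ) * L2)) := htri
          _ ≤ 3 / 4 * Real.exp ((1 + ε) * t) + 3 / 4 := by linarith
          _ ≤ 3 / 2 * Real.exp ((1 + ε) * t) := by linarith
      calc ‖Dm m z‖ ≤ 3 / 2 * Real.exp ((1 + ε) * t) := hbd
        _ ≤ 6 * Real.sinh ((1 + ε) * t) := by linarith
        _ ≤ (4 * (1 + a) * (Real.exp (4 * (1 + a)) + 2) + (1 + a) + 6)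
              * Real.sinh ((1 + ε) * t) := by
            apply mul_le_mul_of_nonneg_right _ hsinhγ0
            linarith
    · -- small t
      have habsG : ‖Complex.exp (-((m : ℂ) * v))‖ = Real.exp (-((m : ℝ) * L2)) := by
        rw [Complex.norm_exp]
        congr 1
        simp [hv, Complex.log_re, hL2, hA2]
      have hid : Dm m z = (1 + z) / 2 * Complex.exp (-((m : ℂ) * v))
          * (Complex.exp ((m : ℂ) * w + (m : ℂ) * v) - 1)
          + z * Complex.exp (-((m : ℂ) * v)) := by
        rw [hDm, Complex.exp_add]
        have hG : Complex.exp (-((m : ℂ) * v)) * Complex.exp ((m : ℂ) * v) = 1 := by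
          rw [← Complex.exp_add]; simp
        linear_combination (-(1 + z) / 2 * Complex.exp ((m : ℂ) * w)) * hG
      have hwabs : ‖Complex.log (1 - z)‖ ≤ 3 / 2 * r := by
        have h := Complex.norm_log_one_add_half_le_self (z := -z)
          (by simpa using hr12)
        rw [show (1 : ℂ) + -z = 1 - z by ring] at h
        simpa using h
      have hvabs : ‖Complex.log (1 + z)‖ ≤ 3 / 2 * r := by
        have h := Complex.norm_log_one_add_half_le_self (z := z)
          (by simpa using hr12)
        simpa using h
      have hsabs : ‖(m : ℂ) * w + (m : ℂ) * v‖ ≤ 4 * (1 + a) * t := by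
        have h1 : ‖(m : ℂ) * w + (m : ℂ) * v‖
            ≤ (m : ℝ) * ‖w‖ + (m : ℝ) * ‖v‖ := by
          have h2 := norm_add_le ((m : ℂ) * w) ((m : ℂ) * v)
          simpa [norm_mul] using h2
        have hwabs' : ‖w‖ ≤ 3 / 2 * r := by
          rw [hw]; simpa using hwabs
        have hvabs' : ‖v‖ ≤ 3 / 2 * r := by rw [hv]; exact hvabs
        have h3 : (m : ℝ) * ‖w‖ ≤ (m : ℝ) * (3 / 2 * r) :=
          mul_le_mul_of_nonneg_left hwabs' (by positivity)
        have h4 : (m : ℝ) * ‖v‖ ≤ (m : ℝ) * (3 / 2 * r) :=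
          mul_le_mul_of_nonneg_left hvabs' (by positivity)
        have h5 : (m : ℝ) * r ≤ (m : ℝ) * ((1 + a) * x) :=
          mul_le_mul_of_nonneg_left hrcx (by positivity)
        have h6 : (0:ℝ) ≤ (1 + a) * ((m : ℝ) * x) := by positivity
        rw [ht]
        nlinarith only [h1, h3, h4, h5, h6]
      have hexps : ‖Complex.exp ((m : ℂ) * w + (m : ℂ) * v) - 1‖
          ≤ (Real.exp (4 * (1 + a)) + 2) * (4 * (1 + a) * t) := by
        have hct0 : 0 < 4 * (1 + a) * t := by positivity
        rcases le_or_gt (‖(m : ℂ) * w + (m : ℂ) * v‖) 1 with hs1 | hs1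
        · have h := Complex.norm_exp_sub_one_le hs1
          nlinarith only [h, hsabs, hct0, Real.exp_pos (4 * (1 + a))]
        · have h1 : ‖Complex.exp ((m : ℂ) * w + (m : ℂ) * v) - 1‖
              ≤ ‖Complex.exp ((m : ℂ) * w + (m : ℂ) * v)‖ + 1 := by
            have := norm_sub_le (Complex.exp ((m : ℂ) * w + (m : ℂ) * v)) 1
            simpa using this
          have h2 : ‖Complex.exp ((m : ℂ) * w + (m : ℂ) * v)‖
              ≤ Real.exp (4 * (1 + a)) := by
            rw [Complex.norm_exp]
            apply Real.exp_le_exp.2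
            have h3 := Complex.re_le_norm ((m : ℂ) * w + (m : ℂ) * v)
            have h4 : 4 * (1 + a) * t ≤ 4 * (1 + a) := by nlinarith only [hts, hc0]
            linarith
          have h5 : 1 ≤ 4 * (1 + a) * t := by linarith
          nlinarith only [h1, h2, h5, Real.exp_pos (4 * (1 + a))]
      have habs_id : ‖Dm m z‖
          ≤ A2 / 2 * Real.exp (-((m : ℝ) * L2))
              * ‖Complex.exp ((m : ℂ) * w + (m : ℂ) * v) - 1‖
            + r * Real.exp (-((m : ℝ) * L2)) := by
        rw [hid]
        calc ‖(1 + z) / 2 * Complex.exp (-((m : ℂ) * v))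
              * (Complex.exp ((m : ℂ) * w + (m : ℂ) * v) - 1)
              + z * Complex.exp (-((m : ℂ) * v))‖
            ≤ ‖(1 + z) / 2 * Complex.exp (-((m : ℂ) * v))
                * (Complex.exp ((m : ℂ) * w + (m : ℂ) * v) - 1)‖
              + ‖z * Complex.exp (-((m : ℂ) * v))‖ := by
              have := norm_add_le ((1 + z) / 2 * Complex.exp (-((m : ℂ) * v))
                * (Complex.exp ((m : ℂ) * w + (m : ℂ) * v) - 1))
                (z * Complex.exp (-((m : ℂ) * v)))
              simpa using this
          _ = A2 / 2 * Real.exp (-((m : ℝ) * L2))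
                * ‖Complex.exp ((m : ℂ) * w + (m : ℂ) * v) - 1‖
              + r * Real.exp (-((m : ℝ) * L2)) := by
              rw [norm_mul, norm_mul, norm_div, habsG, Complex.norm_two, norm_mul, habsG]
      have s1 : A2 / 2 * Real.exp (-((m : ℝ) * L2)) ≤ 3 / 4 := by
        nlinarith only [hA2le', hexp2le1, Real.exp_pos (-((m : ℝ) * L2)), hA2pos]
      have s2 : A2 / 2 * Real.exp (-((m : ℝ) * L2))
            * ‖Complex.exp ((m : ℂ) * w + (m : ℂ) * v) - 1‖
          ≤ 3 / 4 * ((Real.exp (4 * (1 + a)) + 2) * (4 * (1 + a) * t)) := by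
        apply mul_le_mul s1 hexps (norm_nonneg _)
        norm_num
      have s3 : r * Real.exp (-((m : ℝ) * L2)) ≤ (1 + a) * t := by
        have u1 : r * Real.exp (-((m : ℝ) * L2)) ≤ r * 1 :=
          mul_le_mul_of_nonneg_left hexp2le1 (norm_nonneg z)
        have u2 : (1 + a) * x ≤ (1 + a) * t := mul_le_mul_of_nonneg_left hxt hc0.le
        linarith
      have hC0 : (0:ℝ) ≤ 3 * (1 + a) * (Real.exp (4 * (1 + a)) + 2) + (1 + a) := by positivity
      calc ‖Dm m z‖
          ≤ (3 * (1 + a) * (Real.exp (4 * (1 + a)) + 2) + (1 + a)) * t := by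
            have : 3 / 4 * ((Real.exp (4 * (1 + a)) + 2) * (4 * (1 + a) * t)) + (1 + a) * t
                = (3 * (1 + a) * (Real.exp (4 * (1 + a)) + 2) + (1 + a)) * t := by ring
            linarith [habs_id, s2, s3]
        _ ≤ (3 * (1 + a) * (Real.exp (4 * (1 + a)) + 2) + (1 + a))
              * Real.sinh ((1 + ε) * t) :=
            mul_le_mul_of_nonneg_left (hγt.trans hsinhγ) hC0
        _ ≤ (4 * (1 + a) * (Real.exp (4 * (1 + a)) + 2) + (1 + a) + 6)
              * Real.sinh ((1 + ε) * t) := by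
            apply mul_le_mul_of_nonneg_right _ hsinhγ0
            nlinarith only [Real.exp_pos (4 * (1 + a)), hc0]
end

section
/- For every a > 0 there exist constants C > 0 and r₀ > 0 such that for all r ∈ (0, r₀) and all θ ∈ [−arctan a, arctan a], | ∫_0^θ (i r e^{it} / sinh(r e^{it})) dt − iθ | ≤ C r². (This is the statement that the integral of 1/sinh along the circular arc of radius r from the point r to the point r e^{iθ} equals iθ + O(r²) uniformly in the wedge V_a.) -/
open scoped Real BigOperators

lemma sinh_sub_self_bound (w : ℂ) (hw : ‖w‖ ≤ 1) :
    ‖Complex.sinh w - w‖ ≤ ‖w‖ ^ 3 := by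
  have h1 := Complex.exp_bound hw (n := 3) (by norm_num)
  have h2 := Complex.exp_bound (x := -w) (by simpa using hw) (n := 3) (by norm_num)
  have hs : ∀ z : ℂ, ∑ m ∈ Finset.range 3, z ^ m / m.factorial = 1 + z + z ^ 2 / 2 := by
    intro z
    rw [Finset.sum_range_succ, Finset.sum_range_succ, Finset.sum_range_one]
    norm_num [Nat.factorial]
    try ring
  rw [hs] at h1 h2
  have key : Complex.sinh w - w =
      ((Complex.exp w - (1 + w + w ^ 2 / 2)) -
        (Complex.exp (-w) - (1 + -w + w ^ 2 / 2))) / 2 := by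
    rw [Complex.sinh]
    ring
  rw [key]
  have habs : ‖-w‖ = ‖w‖ := by simp
  rw [habs] at h2
  norm_num [Nat.factorial] at h1 h2
  have ht := norm_sub_le (Complex.exp w - (1 + w + w ^ 2 / 2))
    (Complex.exp (-w) - (1 + -w + w ^ 2 / 2))
  rw [norm_div, Complex.norm_two]
  nlinarith [pow_nonneg (norm_nonneg w) 3]

/-- For every `a > 0` there are `C > 0` and `r₀ > 0` such that for all `r ∈ (0, r₀)` and
`θ ∈ [−arctan a, arctan a]`, the contour integral of `1/sinh` along the circular arc of
radius `r` from `r` to `r·e^{iθ}` satisfies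
`|∫_0^θ (i r e^{it}/sinh(r e^{it})) dt − iθ| ≤ C r²`. -/
theorem arc_integral_one_div_sinh (a : ℝ) (ha : 0 < a) :
    ∃ C : ℝ, 0 < C ∧ ∃ r₀ : ℝ, 0 < r₀ ∧
      ∀ r : ℝ, 0 < r → r < r₀ →
        ∀ θ : ℝ, -Real.arctan a ≤ θ → θ ≤ Real.arctan a →
          ‖((∫ t in (0 : ℝ)..θ,
              Complex.I * r * Complex.exp (Complex.I * t) /
                Complex.sinh (r * Complex.exp (Complex.I * t))) - Complex.I * θ)‖ ≤
            C * r ^ 2 := by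
  have hat : 0 < Real.arctan a := by
    rw [← Real.arctan_zero]
    exact Real.arctan_strictMono ha
  refine ⟨2 * Real.arctan a, by positivity, 1/2, by norm_num, ?_⟩
  intro r hr hr2 θ hθ1 hθ2
  have hr1 : r ≤ 1 := by linarith
  -- properties of w t = r * exp(I t)
  have habsw : ∀ t : ℝ, ‖(r : ℂ) * Complex.exp (Complex.I * t)‖ = r := by
    intro t
    rw [norm_mul, Complex.norm_exp]
    simp [Complex.norm_of_nonneg hr.le, hr.le]
  have hsinh_lb : ∀ t : ℝ,
      r / 2 ≤ ‖Complex.sinh ((r:ℂ) * Complex.exp (Complex.I * t))‖ := by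
    intro t
    set w : ℂ := (r : ℂ) * Complex.exp (Complex.I * t) with hwdef
    have hw : ‖w‖ = r := habsw t
    have hb := sinh_sub_self_bound w (by rw [hw]; exact hr1)
    have h3 : ‖w‖ ≤ ‖Complex.sinh w‖ +
        ‖Complex.sinh w - w‖ := by
      calc ‖w‖ = ‖Complex.sinh w - (Complex.sinh w - w)‖ := by
            congr 1; ring
        _ ≤ _ := norm_sub_le _ _
    have hsq : r ^ 2 ≤ 1 / 4 := by nlinarith
    have hcube : r ^ 3 ≤ r / 2 := by nlinarith
    rw [hw] at hb h3
    linarith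
  have hne : ∀ t : ℝ, Complex.sinh ((r:ℂ) * Complex.exp (Complex.I * t)) ≠ 0 := by
    intro t h
    have := hsinh_lb t
    rw [h] at this
    simp at this
    linarith
  set g : ℝ → ℂ := fun t => Complex.I * r * Complex.exp (Complex.I * t) /
      Complex.sinh ((r : ℂ) * Complex.exp (Complex.I * t)) with hg
  have hcont : Continuous g := by
    apply Continuous.div
    · fun_prop
    · fun_prop
    · exact hne
  have hint : IntervalIntegrable g MeasureTheory.volume 0 θ :=
    hcont.intervalIntegrable 0 θ
  have hintc : IntervalIntegrable (fun _ : ℝ => Complex.I) MeasureTheory.volume 0 θ :=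
    intervalIntegrable_const
  have hbound : ∀ t : ℝ, ‖g t - Complex.I‖ ≤ 2 * r ^ 2 := by
    intro t
    set w : ℂ := (r : ℂ) * Complex.exp (Complex.I * t) with hwdef
    have hw : ‖w‖ = r := habsw t
    have hne' : w ≠ 0 := by
      intro h
      rw [h] at hw; simp at hw; linarith
    have heq : g t - Complex.I = Complex.I * (w - Complex.sinh w) / Complex.sinh w := by
      rw [hg, hwdef]
      field_simp [hne t]
    rw [heq, norm_div, norm_mul, Complex.norm_I, one_mul]
    have hb : ‖w - Complex.sinh w‖ ≤ r ^ 3 := by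
      have := sinh_sub_self_bound w (by rw [hw]; exact hr1)
      rw [hw] at this
      calc ‖w - Complex.sinh w‖ = ‖Complex.sinh w - w‖ := by
            rw [← norm_neg]; ring_nf
        _ ≤ r ^ 3 := this
    have hlb := hsinh_lb t
    rw [div_le_iff₀ (by linarith)]
    nlinarith
  have hsplit : (∫ t in (0:ℝ)..θ, g t) - Complex.I * θ
      = ∫ t in (0:ℝ)..θ, (g t - Complex.I) := by
    rw [intervalIntegral.integral_sub hint hintc, intervalIntegral.integral_const,
      sub_zero, Complex.real_smul]
    ring
  have hθabs : |θ| ≤ Real.arctan a := abs_le.mpr ⟨hθ1, hθ2⟩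
  calc ‖(∫ t in (0:ℝ)..θ, g t) - Complex.I * θ‖
      = ‖∫ t in (0:ℝ)..θ, (g t - Complex.I)‖ := by rw [hsplit]
    _ ≤ 2 * r ^ 2 * |θ - 0| := by
        apply intervalIntegral.norm_integral_le_of_norm_le_const
        intro t _
        exact hbound t
    _ ≤ 2 * Real.arctan a * r ^ 2 := by
        rw [sub_zero]
        nlinarith [abs_nonneg θ, sq_nonneg r]
end

section
/- For every m ≥ 1 and every complex g with |g| < 1/4, the recursion X_1(g) = g, X_m(g) = g/(1 − X_{m−1}(g)) is well defined (i.e. X_{m−1}(g) ≠ 1 at every step), and one has |X_m(g)| ≤ X_m(|g|) < 1/2, where X_m(|g|) denotes the value of the recursion at the nonnegative real number |g|. -/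
open scoped Real BigOperators

/-- The same recursion at a real argument:
`X_0 = 0`, `X_1(t) = t`, `X_m(t) = t/(1 - X_{m-1}(t))`. -/
noncomputable def Xr : ℕ → ℝ → ℝ
  | 0, _ => 0
  | (m + 1), t => t / (1 - Xr m t)

lemma Xr_bounds (t : ℝ) (ht0 : 0 ≤ t) (ht : t < 1/4) :
    ∀ m, 0 ≤ Xr m t ∧ Xr m t < 1/2 := by
  intro m
  induction m with
  | zero => simp [Xr]
  | succ n ih =>
    obtain ⟨h0, h1⟩ := ih
    refine ⟨div_nonneg ht0 (by linarith), ?_⟩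
    rw [Xr, div_lt_iff₀ (by linarith)]
    nlinarith

lemma Xc_le (g : ℂ) (hg : ‖g‖ < 1/4) :
    ∀ m, ‖Xc m g‖ ≤ Xr m ‖g‖ := by
  intro m
  induction m with
  | zero => simp [Xc, Xr]
  | succ n ih =>
    have hb := Xr_bounds ‖g‖ (norm_nonneg g) hg n
    have habs : ‖Xc n g‖ < 1/2 := lt_of_le_of_lt ih hb.2
    have hd : 1 - Xr n ‖g‖ ≤ ‖1 - Xc n g‖ := by
      have h := norm_sub_norm_le (1 : ℂ) (Xc n g)
      simp only [norm_one] at h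
      linarith
    have hdpos : (0:ℝ) < 1 - Xr n ‖g‖ := by linarith [hb.2]
    rw [Xc, Xr, norm_div]
    exact div_le_div_of_nonneg_left (norm_nonneg g) hdpos hd

/-- For every `m ≥ 1` and complex `|g| < 1/4`, the recursion defining `X_m(g)` is well
defined (no denominator `1 − X_k(g)` vanishes along the way), and
`|X_m(g)| ≤ X_m(|g|) < 1/2`. -/
theorem Xc_well_defined_and_bounded (m : ℕ) (hm : 1 ≤ m) (g : ℂ)
    (hg : ‖g‖ < 1 / 4) :
    (∀ k : ℕ, k < m → Xc k g ≠ 1) ∧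
      ‖Xc m g‖ ≤ Xr m ‖g‖ ∧
      Xr m ‖g‖ < 1 / 2 := by
  have hb := fun k => Xr_bounds ‖g‖ (norm_nonneg g) hg k
  have hle := Xc_le g hg
  refine ⟨fun k _ h1 => ?_, hle m, (hb m).2⟩
  have : ‖Xc k g‖ < 1/2 := lt_of_le_of_lt (hle k) (hb k).2
  rw [h1] at this; simp at this; linarith
end
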